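/- Let B > 0, r_+ > 0, and suppose r(u) = r_+ − (1/B)·u·(1 + ψ(u, u^{μ+1})) for 0 ≤ u < ε, where μ > 0 and ψ is a convergent double power series with ψ(0,0) = 0 (i.e., ψ(X₁, X₂) = Σ_{k₁+k₂≥1} a_{k₁k₂} X₁^{k₁} X₂^{k₂}). Then r is strictly decreasing near u = 0 and its inverse function u = u(r) satisfies u(r) = B·(r_+ − r)·(1 + φ(r_+ − r, (r_+ − r)^{μ+1})) near r = r_+ for some convergent double power series φ with φ(0,0) = 0. -/

import Mathlib

open Set

private lemma rpow_analytic (μ : ℝ) : AnalyticAt ℝ (fun x : ℝ => (1+x) ^ (μ+1)) 0 := by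
  have hc : AnalyticAt ℂ (fun z : ℂ => (1+z) ^ ((μ+1 : ℝ) : ℂ)) ((0:ℝ):ℂ) := by
    apply AnalyticAt.cpow (analyticAt_const.add (analyticAt_id)) analyticAt_const
    simp [Complex.mem_slitPlane_iff]
  have h2 : AnalyticAt ℝ (fun x : ℝ => ((x:ℂ))) (0:ℝ) := Complex.ofRealCLM.analyticAt 0
  have h3 : AnalyticAt ℝ (fun x : ℝ => (1+(x:ℂ)) ^ ((μ+1:ℝ):ℂ)) 0 :=
    (hc.restrictScalars (𝕜 := ℝ)).comp h2
  have h1 : AnalyticAt ℝ (fun x : ℝ => ((1+(x:ℂ)) ^ ((μ+1:ℝ):ℂ)).re) 0 :=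
    (Complex.reCLM.analyticAt _).comp h3
  apply h1.congr
  filter_upwards [eventually_gt_nhds (by norm_num : (-1:ℝ) < 0)] with x hx
  have h0 : (0:ℝ) ≤ 1 + x := by linarith
  rw [show ((1:ℂ) + (x:ℂ)) = (((1 + x : ℝ)):ℂ) by push_cast; ring, ← Complex.ofReal_cpow h0]
  simp

private lemma inv_aux (B μ : ℝ) (hB : 0 < B) (hμ : 0 < μ)
    (ψ : ℝ × ℝ → ℝ) (hψ : AnalyticAt ℝ ψ (0, 0)) (hψ0 : ψ (0, 0) = 0) :
    ∃ φ : ℝ × ℝ → ℝ, AnalyticAt ℝ φ (0, 0) ∧ φ (0, 0) = 0 ∧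
      ∀ᶠ p : ℝ × ℝ in nhds (0, 0),
        (1 + φ p) * (1 + ψ (B * p.1 * (1 + φ p), B ^ (μ+1) * p.2 * (1 + φ p) ^ (μ+1))) = 1 := by
  classical
  set g : ℝ → ℝ := fun x => (1+x) ^ (μ+1) with hg_def
  have hg : AnalyticAt ℝ g 0 := rpow_analytic μ
  have hg0 : g 0 = 1 := by simp [hg_def]
  set inr : ℝ × ℝ × ℝ → ℝ × ℝ := fun p =>
    (B * p.1 * (1 + p.2.2), B ^ (μ+1) * p.2.1 * g p.2.2) with hinr_def
  have hinr0 : inr 0 = (0, 0) := by simp [hinr_def]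
  set Ψ : ℝ × ℝ × ℝ → ℝ := fun p => (1 + p.2.2) * (1 + ψ (inr p)) - 1 with hΨ_def
  set G : ℝ × ℝ × ℝ → ℝ × ℝ × ℝ := fun p => (p.1, p.2.1, Ψ p) with hG_def
  have hΨ0 : Ψ 0 = 0 := by
    show (1 + (0:ℝ×ℝ×ℝ).2.2) * (1 + ψ (inr 0)) - 1 = 0
    rw [hinr0, hψ0]; norm_num
  have hG0 : G 0 = 0 := by
    show ((0:ℝ×ℝ×ℝ).1, (0:ℝ×ℝ×ℝ).2.1, Ψ 0) = 0
    rw [hΨ0]; rfl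
  -- analyticity of G
  have hfst : AnalyticAt ℝ (fun p : ℝ × ℝ × ℝ => p.1) 0 :=
    (ContinuousLinearMap.fst ℝ ℝ (ℝ × ℝ)).analyticAt 0
  have hsnd1 : AnalyticAt ℝ (fun p : ℝ × ℝ × ℝ => p.2.1) 0 :=
    ((ContinuousLinearMap.fst ℝ ℝ ℝ).comp (ContinuousLinearMap.snd ℝ ℝ (ℝ × ℝ))).analyticAt 0
  have hsnd2 : AnalyticAt ℝ (fun p : ℝ × ℝ × ℝ => p.2.2) 0 :=
    ((ContinuousLinearMap.snd ℝ ℝ ℝ).comp (ContinuousLinearMap.snd ℝ ℝ (ℝ × ℝ))).analyticAt 0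
  have hgc : AnalyticAt ℝ (fun p : ℝ × ℝ × ℝ => g p.2.2) 0 :=
    AnalyticAt.comp (g := g) (x := (0 : ℝ × ℝ × ℝ)) hg hsnd2
  have hinrA : AnalyticAt ℝ inr 0 := by
    apply AnalyticAt.prod
    · exact (analyticAt_const.mul hfst).mul (analyticAt_const.add hsnd2)
    · exact (analyticAt_const.mul hsnd1).mul hgc
  have hψ' : AnalyticAt ℝ ψ (inr 0) := by rw [hinr0]; exact hψ
  have hΨA : AnalyticAt ℝ Ψ 0 :=
    ((analyticAt_const.add hsnd2).mul (analyticAt_const.add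
      (AnalyticAt.comp (x := (0 : ℝ × ℝ × ℝ)) hψ' hinrA))).sub analyticAt_const
  have hGA : AnalyticAt ℝ G 0 := hfst.prod (hsnd1.prod hΨA)
  -- derivative of G at 0
  set fst3 : ℝ × ℝ × ℝ →L[ℝ] ℝ := ContinuousLinearMap.fst ℝ ℝ (ℝ × ℝ) with hfst3
  set snd23 : ℝ × ℝ × ℝ →L[ℝ] ℝ :=
    (ContinuousLinearMap.fst ℝ ℝ ℝ).comp (ContinuousLinearMap.snd ℝ ℝ (ℝ × ℝ)) with hsnd23
  set thd : ℝ × ℝ × ℝ →L[ℝ] ℝ :=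
    (ContinuousLinearMap.snd ℝ ℝ ℝ).comp (ContinuousLinearMap.snd ℝ ℝ (ℝ × ℝ)) with hthd
  set D : ℝ × ℝ →L[ℝ] ℝ := fderiv ℝ ψ (0, 0) with hD_def
  have hD : ∀ x y : ℝ, D (x, y) = x * D (1, 0) + y * D (0, 1) := by
    intro x y
    have h : (x, y) = x • ((1:ℝ), (0:ℝ)) + y • ((0:ℝ), (1:ℝ)) := by simp
    rw [h, map_add, map_smul, map_smul, smul_eq_mul, smul_eq_mul]
  set a : ℝ := B * D (1, 0) with ha_def
  set b : ℝ := B ^ (μ+1) * D (0, 1) with hb_def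
  set M : ℝ × ℝ × ℝ →L[ℝ] ℝ × ℝ × ℝ :=
    fst3.prod (snd23.prod (a • fst3 + b • snd23 + thd)) with hM_def
  set Minv : ℝ × ℝ × ℝ →L[ℝ] ℝ × ℝ × ℝ :=
    fst3.prod (snd23.prod (thd - a • fst3 - b • snd23)) with hMinv_def
  have hJ : HasFDerivAt inr ((B • fst3).prod ((B ^ (μ+1)) • snd23)) 0 := by
    have h1 : HasFDerivAt (fun p : ℝ × ℝ × ℝ => B * p.1 * (1 + p.2.2)) (B • fst3) 0 := by
      have h := ((fst3.hasFDerivAt (x := 0)).const_mul B).mul (thd.hasFDerivAt.const_add 1)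
      apply h.congr_fderiv
      apply ContinuousLinearMap.ext
      intro v
      simp [hfst3, hthd]
    have hgd : HasFDerivAt (fun p : ℝ × ℝ × ℝ => g p.2.2) ((fderiv ℝ g 0).comp thd) 0 :=
      HasFDerivAt.comp (g := g) (x := (0 : ℝ × ℝ × ℝ)) hg.differentiableAt.hasFDerivAt thd.hasFDerivAt
    have h2 : HasFDerivAt (fun p : ℝ × ℝ × ℝ => B ^ (μ+1) * p.2.1 * g p.2.2)
        ((B ^ (μ+1)) • snd23) 0 := by
      have h := ((snd23.hasFDerivAt (x := 0)).const_mul (B ^ (μ+1))).mul hgd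
      apply h.congr_fderiv
      apply ContinuousLinearMap.ext
      intro v
      simp [hsnd23, hg0]
    exact HasFDerivAt.prodMk h1 h2
  have hψd : HasFDerivAt ψ D (inr 0) := by
    rw [hinr0]; exact hψ.differentiableAt.hasFDerivAt
  have hcomp : HasFDerivAt (fun p : ℝ × ℝ × ℝ => ψ (inr p)) (D.comp ((B • fst3).prod ((B ^ (μ+1)) • snd23))) 0 :=
    HasFDerivAt.comp (x := (0 : ℝ × ℝ × ℝ)) hψd hJ
  have hΨd : HasFDerivAt Ψ (a • fst3 + b • snd23 + thd) 0 := by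
    have h := ((thd.hasFDerivAt.const_add 1).mul (hcomp.const_add 1)).sub_const 1
    apply h.congr_fderiv
    apply ContinuousLinearMap.ext
    intro v
    have h0 : ψ (inr 0) = 0 := by rw [hinr0]; exact hψ0
    simp [hfst3, hsnd23, hthd, h0, ha_def, hb_def]
    rw [hD]
    ring
  have hGd : HasFDerivAt G M 0 := HasFDerivAt.prodMk (fst3.hasFDerivAt) (HasFDerivAt.prodMk (snd23.hasFDerivAt) hΨd)
  -- the equivalence
  have hMapp : ∀ v : ℝ × ℝ × ℝ, M v = (v.1, v.2.1, a * v.1 + b * v.2.1 + v.2.2) := by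
    intro v; simp [hM_def, hfst3, hsnd23, hthd]
  have hMinvapp : ∀ v : ℝ × ℝ × ℝ, Minv v = (v.1, v.2.1, v.2.2 - a * v.1 - b * v.2.1) := by
    intro v; simp [hMinv_def, hfst3, hsnd23, hthd]
  have hleft : Function.LeftInverse Minv M := by
    intro v; rw [hMapp, hMinvapp]
    exact Prod.ext rfl (Prod.ext rfl (by dsimp only; ring))
  have hright : Function.RightInverse Minv M := by
    intro v; rw [hMinvapp, hMapp]
    exact Prod.ext rfl (Prod.ext rfl (by dsimp only; ring))
  set i : (ℝ × ℝ × ℝ) ≃L[ℝ] ℝ × ℝ × ℝ := ContinuousLinearEquiv.equivOfInverse M Minv hleft hright with hi_def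
  have hicoe : (i : ℝ × ℝ × ℝ →L[ℝ] ℝ × ℝ × ℝ) = M := rfl
  have hstrict : HasStrictFDerivAt G (i : ℝ × ℝ × ℝ →L[ℝ] ℝ × ℝ × ℝ) 0 := by
    have hs := hGA.hasStrictFDerivAt
    rwa [hGd.fderiv, ← hicoe] at hs
  set P := HasStrictFDerivAt.toOpenPartialHomeomorph (f := G) (hf := hstrict) with hP_def
  have hPcoe : (P : ℝ × ℝ × ℝ → ℝ × ℝ × ℝ) = G := rfl
  have hmem : (0 : ℝ × ℝ × ℝ) ∈ P.source := HasStrictFDerivAt.mem_toOpenPartialHomeomorph_source (hf := hstrict)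
  have hsymmA : AnalyticAt ℝ P.symm (G 0) := by
    apply P.analyticAt_symm' hmem (by rw [hPcoe]; exact hGA)
    rw [hPcoe, hGd.fderiv, hicoe]
  set linv : ℝ × ℝ × ℝ → ℝ × ℝ × ℝ := ⇑P.symm with hlinv_def
  set e : ℝ × ℝ →L[ℝ] ℝ × ℝ × ℝ :=
    (ContinuousLinearMap.fst ℝ ℝ ℝ).prod ((ContinuousLinearMap.snd ℝ ℝ ℝ).prod 0) with he_def
  have heapp : ∀ p : ℝ × ℝ, e p = (p.1, p.2, 0) := fun p => rfl
  have he0 : e (0, 0) = G 0 := by rw [hG0]; rfl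
  refine ⟨fun p => (linv (e p)).2.2, ?_, ?_, ?_⟩
  · have h1 : AnalyticAt ℝ (fun p : ℝ × ℝ => linv (e p)) (0, 0) := by
      apply AnalyticAt.comp (x := ((0,0) : ℝ × ℝ)) (f := ⇑e) (g := linv)
      · rw [he0]; exact hsymmA
      · exact e.analyticAt (0, 0)
    exact AnalyticAt.comp (x := ((0,0) : ℝ × ℝ)) (g := fun q : ℝ × ℝ × ℝ => q.2.2)
      (f := fun p : ℝ × ℝ => linv (e p)) (thd.analyticAt _) h1
  · show (linv (e (0, 0))).2.2 = 0
    rw [he0]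
    have h := P.left_inv hmem
    have h2 : linv (G 0) = 0 := h
    rw [h2]
    rfl
  · have htarget : ∀ᶠ y in nhds (G 0), G (linv y) = y := by
      have h := P.eventually_right_inverse' hmem
      exact h
    have hten : Filter.Tendsto (⇑e) (nhds ((0,0) : ℝ × ℝ)) (nhds (G 0)) := by
      rw [← he0]; exact e.continuous.continuousAt
    filter_upwards [hten.eventually htarget] with p hp
    set w : ℝ × ℝ × ℝ := linv (e p) with hw_def
    rw [heapp] at hp
    have h1 : w.1 = p.1 := congrArg Prod.fst hp
    have h2 : w.2.1 = p.2 := congrArg (fun q : ℝ × ℝ × ℝ => q.2.1) hp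
    have h3 : Ψ w = 0 := congrArg (fun q : ℝ × ℝ × ℝ => q.2.2) hp
    have h4 : (1 + w.2.2) * (1 + ψ (B * w.1 * (1 + w.2.2),
        B ^ (μ+1) * w.2.1 * (1 + w.2.2) ^ (μ+1))) - 1 = 0 := h3
    rw [h1, h2] at h4
    linarith


set_option maxHeartbeats 1000000 in
theorem stmt_17 (B rp μ ε : ℝ) (hB : 0 < B) (hrp : 0 < rp) (hμ : 0 < μ) (hε : 0 < ε)
    (ψ : ℝ × ℝ → ℝ) (hψ : AnalyticAt ℝ ψ (0, 0)) (hψ0 : ψ (0, 0) = 0)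
    (r : ℝ → ℝ)
    (hr : ∀ u ∈ Ico (0:ℝ) ε,
      r u = rp - (1 / B) * u * (1 + ψ (u, u ^ (μ + 1)))) :
    ∃ ε' : ℝ, 0 < ε' ∧ ε' ≤ ε ∧ StrictAntiOn r (Ico 0 ε') ∧
      ∃ φ : ℝ × ℝ → ℝ, AnalyticAt ℝ φ (0, 0) ∧ φ (0, 0) = 0 ∧
        ∀ u ∈ Ico (0:ℝ) ε',
          u = B * (rp - r u) * (1 + φ (rp - r u, (rp - r u) ^ (μ + 1))) := by
  classical
  obtain ⟨φ, hφA, hφ0, hφid⟩ := inv_aux B μ hB hμ ψ hψ hψ0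
  set sfun : ℝ → ℝ := fun v => (1 / B) * v * (1 + ψ (v, v ^ (μ + 1))) with hsfun_def
  -- neighborhood facts about ψ
  set Mb : ℝ := ‖fderiv ℝ ψ (0, 0)‖ + 1 with hMb_def
  have hMb : 0 < Mb := by positivity
  have Eψ1 : ∀ᶠ q : ℝ × ℝ in nhds (0, 0), AnalyticAt ℝ ψ q := hψ.eventually_analyticAt
  have hψcont : Filter.Tendsto ψ (nhds ((0,0) : ℝ × ℝ)) (nhds 0) := by
    have := hψ.continuousAt
    rwa [ContinuousAt, hψ0] at this
  have Eψ2 : ∀ᶠ q : ℝ × ℝ in nhds (0, 0), |ψ q| < 1/4 := by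
    have := hψcont (Metric.ball_mem_nhds 0 (by norm_num : (0:ℝ) < 1/4))
    filter_upwards [this] with q hq
    simpa [Real.dist_eq] using hq
  have Eψ3 : ∀ᶠ q : ℝ × ℝ in nhds (0, 0), ‖fderiv ℝ ψ q‖ < Mb := by
    have h1 : ContinuousAt (fun q => ‖fderiv ℝ ψ q‖) (0, 0) := hψ.fderiv.continuousAt.norm
    exact h1.eventually_lt_const (by simp [hMb_def])
  obtain ⟨ρ, hρ, hball⟩ := Metric.eventually_nhds_iff_ball.mp ((Eψ1.and Eψ2).and Eψ3)
  -- continuity of v ↦ (v, v^(μ+1)) at 0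
  have hrpc : ContinuousAt (fun v : ℝ => v ^ (μ + 1)) 0 :=
    Real.continuousAt_rpow_const 0 (μ + 1) (Or.inr (by linarith))
  have hcurve : Filter.Tendsto (fun v : ℝ => (v, v ^ (μ + 1))) (nhds 0)
      (nhds ((0, 0) : ℝ × ℝ)) := by
    have h0 : (0:ℝ) ^ (μ + 1) = 0 := Real.zero_rpow (by linarith)
    have := (continuousAt_id (x := (0:ℝ))).prodMk hrpc
    rwa [ContinuousAt, id_eq, h0] at this
  obtain ⟨δa, hδa, hδaball⟩ := Metric.eventually_nhds_iff_ball.mp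
    (hcurve (Metric.ball_mem_nhds _ hρ))
  -- choose δ₀ for strict monotonicity
  set Kb : ℝ := Mb * (μ + 1) with hKb_def
  have hKb : 0 < Kb := by positivity
  set δ₀ : ℝ := min (min 1 (δa / 2)) (1 / (4 * Kb)) with hδ₀_def
  have hδ₀ : 0 < δ₀ := by positivity
  have hδ₀1 : δ₀ ≤ 1 := le_trans (min_le_left _ _) (min_le_left _ _)
  have hδ₀a : δ₀ ≤ δa / 2 := le_trans (min_le_left _ _) (min_le_right _ _)
  have hδ₀K : δ₀ ≤ 1 / (4 * Kb) := min_le_right _ _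
  have hIccBall : ∀ v ∈ Icc (0:ℝ) δ₀, (v, v ^ (μ + 1)) ∈ Metric.ball ((0,0) : ℝ × ℝ) ρ := by
    intro v hv
    apply hδaball
    rw [Metric.mem_ball, Real.dist_eq, sub_zero, abs_of_nonneg hv.1]
    linarith [hv.2]
  -- strict monotonicity of sfun on Icc 0 δ₀
  have hψq : ∀ v ∈ Icc (0:ℝ) δ₀, AnalyticAt ℝ ψ (v, v ^ (μ + 1)) ∧
      |ψ (v, v ^ (μ + 1))| < 1/4 ∧ ‖fderiv ℝ ψ (v, v ^ (μ + 1))‖ < Mb :=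
    fun v hv => ⟨(hball _ (hIccBall v hv)).1.1, (hball _ (hIccBall v hv)).1.2,
      (hball _ (hIccBall v hv)).2⟩
  have hcont : ContinuousOn sfun (Icc 0 δ₀) := by
    intro v hv
    apply ContinuousAt.continuousWithinAt
    have h1 : ContinuousAt (fun v : ℝ => (v, v ^ (μ + 1))) v := by
      apply (continuousAt_id).prodMk
      exact Real.continuousAt_rpow_const v (μ + 1) (Or.inr (by linarith))
    exact (continuousAt_const.mul continuousAt_id).mul
      (continuousAt_const.add (ContinuousAt.comp (x := v) (g := ψ)
        (f := fun w : ℝ => (w, w ^ (μ + 1))) (hψq v hv).1.continuousAt h1))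
  have hderiv : ∀ v ∈ Ioo (0:ℝ) δ₀, 0 < deriv sfun v := by
    intro v hv
    obtain ⟨hvA, hvB, hvM⟩ := hψq v ⟨le_of_lt hv.1, le_of_lt hv.2⟩
    set Dv : ℝ := fderiv ℝ ψ (v, v ^ (μ + 1)) (1, (μ + 1) * v ^ μ) with hDv_def
    have hrpd : HasDerivAt (fun v : ℝ => v ^ (μ + 1)) ((μ + 1) * v ^ μ) v := by
      have := Real.hasDerivAt_rpow_const (x := v) (p := μ + 1) (Or.inl (ne_of_gt hv.1))
      simpa using this
    have hqd : HasDerivAt (fun v : ℝ => (v, v ^ (μ + 1))) ((1 : ℝ), (μ + 1) * v ^ μ) v :=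
      HasDerivAt.prodMk (hasDerivAt_id v) hrpd
    have hψd : HasDerivAt (fun w : ℝ => ψ (w, w ^ (μ + 1))) Dv v :=
      hvA.differentiableAt.hasFDerivAt.comp_hasDerivAt v hqd
    have hmul : HasDerivAt (fun w : ℝ => w * (1 + ψ (w, w ^ (μ + 1))))
        (1 * (1 + ψ (v, v ^ (μ + 1))) + v * Dv) v :=
      (hasDerivAt_id v).mul (hψd.const_add 1)
    have htot : HasDerivAt sfun ((1/B) * (1 * (1 + ψ (v, v ^ (μ + 1))) + v * Dv)) v := by
      have h := hmul.const_mul (1/B)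
      apply h.congr_of_eventuallyEq
      filter_upwards with w
      simp [hsfun_def, mul_assoc]
    rw [htot.deriv]
    -- bound |Dv|
    have hDvb : |Dv| ≤ Kb := by
      have h1 : ‖Dv‖ ≤ ‖fderiv ℝ ψ (v, v ^ (μ + 1))‖ * ‖((1:ℝ), (μ + 1) * v ^ μ)‖ :=
        (fderiv ℝ ψ (v, v ^ (μ + 1))).le_opNorm _
      have h2 : ‖((1:ℝ), (μ + 1) * v ^ μ)‖ ≤ μ + 1 := by
        rw [Prod.norm_def]
        apply max_le
        · simp
          linarith
        · rw [Real.norm_eq_abs,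
            abs_of_nonneg (mul_nonneg (by linarith) (Real.rpow_nonneg hv.1.le μ))]
          have : v ^ μ ≤ 1 := Real.rpow_le_one (le_of_lt hv.1) (le_trans (le_of_lt hv.2) hδ₀1)
            (le_of_lt hμ)
          nlinarith
      calc |Dv| = ‖Dv‖ := (Real.norm_eq_abs Dv).symm
        _ ≤ ‖fderiv ℝ ψ (v, v ^ (μ + 1))‖ * ‖((1:ℝ), (μ + 1) * v ^ μ)‖ := h1
        _ ≤ Mb * (μ + 1) := by
            apply mul_le_mul (le_of_lt hvM) h2 (norm_nonneg _) (le_of_lt hMb)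
        _ = Kb := rfl
    have habs := abs_lt.mp hvB
    have habs2 := abs_le.mp hDvb
    have hvK : v * |Dv| ≤ 1/4 := by
      have : v * |Dv| ≤ δ₀ * Kb := by
        apply mul_le_mul (le_of_lt hv.2) hDvb (abs_nonneg _) (le_of_lt hδ₀)
      have h4 : δ₀ * Kb ≤ 1/4 := by
        have h5 := mul_le_mul_of_nonneg_right hδ₀K hKb.le
        have heq : 1 / (4 * Kb) * Kb = 1/4 := by field_simp
        linarith
      linarith
    have hvD : -(1/4) ≤ v * Dv := by
      have := neg_abs_le Dv
      nlinarith [hv.1.le, abs_nonneg Dv]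
    apply mul_pos (by positivity)
    nlinarith
  have hmono : StrictMonoOn sfun (Icc 0 δ₀) :=
    strictMonoOn_of_deriv_pos (convex_Icc 0 δ₀) hcont (by rwa [interior_Icc])
  -- region where the identity and |φ| < 1/2 hold
  have hφcont : Filter.Tendsto φ (nhds ((0,0) : ℝ × ℝ)) (nhds 0) := by
    have := hφA.continuousAt
    rwa [ContinuousAt, hφ0] at this
  have Eφ2 : ∀ᶠ p : ℝ × ℝ in nhds (0, 0), |φ p| < 1/2 := by
    have := hφcont (Metric.ball_mem_nhds 0 (by norm_num : (0:ℝ) < 1/2))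
    filter_upwards [this] with q hq
    simpa [Real.dist_eq] using hq
  obtain ⟨ρ₂, hρ₂, hball₂⟩ := Metric.eventually_nhds_iff_ball.mp (hφid.and Eφ2)
  obtain ⟨δb, hδb, hδbball⟩ := Metric.eventually_nhds_iff_ball.mp
    (hcurve (Metric.ball_mem_nhds _ hρ₂))
  set δ₂ : ℝ := δb / 2 with hδ₂_def
  have hδ₂ : 0 < δ₂ := by positivity
  set ε' : ℝ := min ε (min (δ₀ / 2) (B * δ₂ / 2)) with hε'_def
  have hε'pos : 0 < ε' := by positivity
  have hε'ε : ε' ≤ ε := min_le_left _ _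
  have hε'δ₀ : ε' ≤ δ₀ / 2 := le_trans (min_le_right _ _) (min_le_left _ _)
  have hε'B : ε' ≤ B * δ₂ / 2 := le_trans (min_le_right _ _) (min_le_right _ _)
  have hrs : ∀ u ∈ Ico (0:ℝ) ε, r u = rp - sfun u := fun u hu => by rw [hr u hu]
  -- per-point facts
  have hkey : ∀ u ∈ Ico (0:ℝ) ε', u ∈ Icc (0:ℝ) δ₀ ∧
      u = B * sfun u * (1 + φ (sfun u, sfun u ^ (μ + 1))) := by
    intro u hu
    have hu0 : (0:ℝ) ≤ u := hu.1
    have huδ : u ≤ δ₀ / 2 := le_of_lt (lt_of_lt_of_le hu.2 hε'δ₀)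
    have huB2 : u ≤ B * δ₂ / 2 := le_of_lt (lt_of_lt_of_le hu.2 hε'B)
    have hU : u ∈ Icc (0:ℝ) δ₀ := ⟨hu0, by linarith only [huδ, hδ₀]⟩
    refine ⟨hU, ?_⟩
    have hbnd := (hψq u hU).2.1
    have habs := abs_lt.mp hbnd
    set s : ℝ := sfun u with hs_def
    have hsB : B * s = u * (1 + ψ (u, u ^ (μ + 1))) := by
      rw [hs_def, hsfun_def]
      field_simp
    have hpos1 : (0:ℝ) ≤ 1 + ψ (u, u ^ (μ + 1)) := by linarith only [habs.1]
    have hs0 : 0 ≤ s := by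
      have h := mul_nonneg hu0 hpos1
      rw [← hsB] at h
      exact nonneg_of_mul_nonneg_right h hB
    have hsB5 : B * s ≤ 5/4 * u := by
      have h := mul_le_mul_of_nonneg_left
        (by linarith only [habs.2] : 1 + ψ (u, u ^ (μ + 1)) ≤ 5/4) hu0
      rw [hsB]
      linarith only [h]
    have hsδ₂ : s < δ₂ := by
      have hBδ : 0 < B * δ₂ := mul_pos hB hδ₂
      have h1 : B * s < B * δ₂ := by linarith only [hsB5, huB2, hBδ, hB]
      exact lt_of_mul_lt_mul_left h1 hB.le
    have hsball : (s, s ^ (μ + 1)) ∈ Metric.ball ((0,0) : ℝ × ℝ) ρ₂ := by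
      apply hδbball
      rw [Metric.mem_ball, Real.dist_eq, sub_zero, abs_of_nonneg hs0]
      rw [hδ₂_def] at hsδ₂
      linarith only [hsδ₂, hδb]
    obtain ⟨hid, hφb⟩ := hball₂ _ hsball
    dsimp only at hid hφb
    have hφabs := abs_lt.mp hφb
    set c : ℝ := 1 + φ (s, s ^ (μ + 1)) with hc_def
    have hc0 : (0:ℝ) < c := by rw [hc_def]; linarith only [hφabs.1]
    have hc2 : c ≤ 3/2 := by rw [hc_def]; linarith only [hφabs.2]
    set ut : ℝ := B * s * c with hut_def
    have hut0 : 0 ≤ ut := mul_nonneg (mul_nonneg hB.le hs0) hc0.le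
    have hutδ : ut ≤ δ₀ := by
      have h1 : (B * s) * c ≤ (5/4 * u) * (3/2) :=
        mul_le_mul hsB5 hc2 hc0.le (by linarith only [hu0])
      have h2 : ut ≤ 15/8 * u := by
        rw [hut_def]
        linarith only [h1]
      linarith only [hδ₀.le, huδ, h2]
    have hpow : ut ^ (μ + 1) = B ^ (μ + 1) * s ^ (μ + 1) * c ^ (μ + 1) := by
      rw [hut_def, Real.mul_rpow (mul_nonneg hB.le hs0) hc0.le,
        Real.mul_rpow hB.le hs0]
    rw [← hpow] at hid
    have hid' : c * (1 + ψ (ut, ut ^ (μ + 1))) = 1 := hid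
    have hsut : sfun ut = s := by
      have h1 : sfun ut = s * (c * (1 + ψ (ut, ut ^ (μ + 1)))) := by
        rw [hsfun_def]
        dsimp only
        rw [hut_def]
        field_simp
      rw [h1, hid', mul_one]
    have hueq : u = ut := by
      apply hmono.injOn hU ⟨hut0, hutδ⟩
      rw [hsut, ← hs_def]
    exact hueq
  refine ⟨ε', hε'pos, hε'ε, ?_, φ, hφA, hφ0, ?_⟩
  · intro u1 h1 u2 h2 hlt
    have hm1 : u1 ∈ Ico (0:ℝ) ε := ⟨h1.1, lt_of_lt_of_le h1.2 hε'ε⟩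
    have hm2 : u2 ∈ Ico (0:ℝ) ε := ⟨h2.1, lt_of_lt_of_le h2.2 hε'ε⟩
    rw [hrs u1 hm1, hrs u2 hm2]
    have hs := hmono (hkey u1 h1).1 (hkey u2 h2).1 hlt
    linarith only [hs]
  · intro u hu
    have hm : u ∈ Ico (0:ℝ) ε := ⟨hu.1, lt_of_lt_of_le hu.2 hε'ε⟩
    have hru : rp - r u = sfun u := by rw [hrs u hm]; ring
    rw [hru]
    exact (hkey u hu).2
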